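/- arXiv:1804.03420 — 3 statements merged into one kernel-verified Lean document; each statement's English description precedes it below -/
import Mathlib

section
/- Let X, Y, N be real-valued random variables on a probability space such that N is independent of the pair (X, Y), and let c be a real constant. Then Y and c·X + N are conditionally independent given the σ-algebra generated by X. -/
open MeasureTheory ProbabilityTheory
open MeasurableSpace

lemma condexp_inter_of_indep' {Ω : Type*}
    {m' m₁ m₂ : MeasurableSpace Ω} [mΩ : MeasurableSpace Ω]
    (hm'₂ : m' ≤ m₂) (hm₂ : m₂ ≤ mΩ) (hm₁ : m₁ ≤ mΩ)
    (P : Measure Ω) [IsProbabilityMeasure P]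
    (hIndep : Indep m₁ m₂ P) {A D : Set Ω} (hA : MeasurableSet[m₁] A)
    (hD : MeasurableSet[m₂] D) :
    (P⟦A ∩ D | m'⟧) =ᵐ[P] (P A).toReal • (P⟦D | m'⟧) := by
  have hm' : m' ≤ mΩ := hm'₂.trans hm₂
  haveI : SigmaFinite (P.trim hm₂) := IsFiniteMeasure.toSigmaFinite _
  haveI : SigmaFinite (P.trim hm') := IsFiniteMeasure.toSigmaFinite _
  have hint : Integrable (A.indicator (fun _ => (1:ℝ))) P :=
    (integrable_const (1:ℝ)).indicator (hm₁ _ hA)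
  set r : ℝ := (P A).toReal with hr
  -- conditional expectation of 1_A given m₂ is the constant P(A)
  have h1 : (P⟦A | m₂⟧) =ᵐ[P] fun _ => r := by
    have h := condExp_indep_eq hm₁ hm₂
      (stronglyMeasurable_const.indicator hA) hIndep (f := A.indicator (fun _ => (1:ℝ)))
    refine h.trans (Filter.EventuallyEq.of_eq (funext fun _ => ?_))
    exact integral_indicator_one (hm₁ _ hA)
  -- pull out the indicator of D
  have h2 : (P⟦A ∩ D | m₂⟧) =ᵐ[P] r • (D.indicator (fun _ => (1:ℝ))) := by
    have hset : (A ∩ D).indicator (fun _ => (1:ℝ))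
        = D.indicator (A.indicator (fun _ => (1:ℝ))) := by
      rw [Set.indicator_indicator, Set.inter_comm]
    have hind : (P⟦A ∩ D | m₂⟧) =ᵐ[P] D.indicator (P⟦A | m₂⟧) := by
      rw [show (P⟦A ∩ D | m₂⟧) = P[(A ∩ D).indicator (fun _ => (1:ℝ)) | m₂] from rfl, hset]
      exact condExp_indicator hint hD
    refine hind.trans ?_
    filter_upwards [h1] with ω hω
    by_cases h : ω ∈ D <;> simp [Set.indicator_apply, h, hω]
  -- tower property
  calc (P⟦A ∩ D | m'⟧) =ᵐ[P] P[P[(A ∩ D).indicator (fun _ => (1:ℝ)) | m₂] | m'] :=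
        (condExp_condExp_of_le hm'₂ hm₂).symm
    _ =ᵐ[P] P[r • (D.indicator (fun _ => (1:ℝ))) | m'] := condExp_congr_ae h2
    _ =ᵐ[P] r • (P⟦D | m'⟧) := condExp_smul r _ m'

/-- Markov-chain step used in the converse of the sum-rate-distortion theorem: if the
innovation `N` is independent of the pair `(X, Y)`, then `Y` and `c·X + N` are conditionally
independent given the σ-algebra generated by `X`. -/
theorem markov_step_condIndep
    {Ω : Type*} [MeasurableSpace Ω] [StandardBorelSpace Ω]
    (P : Measure Ω) [IsProbabilityMeasure P]
    (X Y N : Ω → ℝ) (hX : Measurable X) (hY : Measurable Y) (hN : Measurable N)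
    (hIndep : IndepFun N (fun ω => (X ω, Y ω)) P) (c : ℝ) :
    CondIndepFun (MeasurableSpace.comap X inferInstance) (hX.comap_le) Y
      (fun ω => c * X ω + N ω) P := by
  have hXY : Measurable (fun ω => (X ω, Y ω)) := hX.prodMk hY
  have hXN : Measurable (fun ω => (X ω, N ω)) := hX.prodMk hN
  haveI : SigmaFinite (P.trim hX.comap_le) := IsFiniteMeasure.toSigmaFinite _
  have hm'₂ : MeasurableSpace.comap X inferInstance
      ≤ MeasurableSpace.comap (fun ω => (X ω, Y ω)) inferInstance := by
    rintro s ⟨t, ht, rfl⟩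
    exact ⟨t ×ˢ Set.univ, ht.prod MeasurableSet.univ, by ext ω; simp⟩
  have hmY₂ : MeasurableSpace.comap Y inferInstance
      ≤ MeasurableSpace.comap (fun ω => (X ω, Y ω)) inferInstance := by
    rintro s ⟨t, ht, rfl⟩
    exact ⟨Set.univ ×ˢ t, MeasurableSet.univ.prod ht, by ext ω; simp⟩
  have hIndep' : Indep (MeasurableSpace.comap N inferInstance)
      (MeasurableSpace.comap (fun ω => (X ω, Y ω)) inferInstance) P := hIndep
  have key : CondIndepFun (MeasurableSpace.comap X inferInstance) hX.comap_le Y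
      (fun ω => (X ω, N ω)) P := by
    rw [condIndepFun_iff_condIndep]
    have hsets : CondIndepSets (MeasurableSpace.comap X inferInstance) hX.comap_le
        {s | MeasurableSet[MeasurableSpace.comap Y inferInstance] s}
        (Set.preimage (fun ω => (X ω, N ω)) ''
          Set.image2 (· ×ˢ ·) {s : Set ℝ | MeasurableSet s} {t : Set ℝ | MeasurableSet t})
        P := by
      rw [condIndepSets_iff]
      rotate_left
      · rintro s ⟨u, hu, rfl⟩; exact hY hu
      · rintro s ⟨_, ⟨u, hu, v, hv, rfl⟩, rfl⟩
        exact hXN (MeasurableSet.prod (by exact hu) (by exact hv))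
      rintro _ _ ⟨u, hu, rfl⟩ ⟨_, ⟨s, hs, t, ht, rfl⟩, rfl⟩
      rw [Set.mk_preimage_prod]
      set r : ℝ := (P (N ⁻¹' t)).toReal with hr
      have hA : MeasurableSet[MeasurableSpace.comap N inferInstance] (N ⁻¹' t) := ⟨t, ht, rfl⟩
      have hC' : MeasurableSet[MeasurableSpace.comap X inferInstance] (X ⁻¹' s) := ⟨s, hs, rfl⟩
      have hCm₂ := hm'₂ _ hC'
      have hBm₂ : MeasurableSet[MeasurableSpace.comap (fun ω => (X ω, Y ω)) inferInstance]
        (Y ⁻¹' u) := hmY₂ _ ⟨u, hu, rfl⟩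
      have hL : (P⟦Y ⁻¹' u ∩ (X ⁻¹' s ∩ N ⁻¹' t) | MeasurableSpace.comap X inferInstance⟧)
          =ᵐ[P] r • (P⟦Y ⁻¹' u ∩ X ⁻¹' s | MeasurableSpace.comap X inferInstance⟧) := by
        rw [show Y ⁻¹' u ∩ (X ⁻¹' s ∩ N ⁻¹' t) = N ⁻¹' t ∩ (Y ⁻¹' u ∩ X ⁻¹' s) by
          ext ω; simp; tauto]
        exact condexp_inter_of_indep' hm'₂ hXY.comap_le hN.comap_le P hIndep' hA
          (hBm₂.inter hCm₂)
      have hBC : (P⟦Y ⁻¹' u ∩ X ⁻¹' s | MeasurableSpace.comap X inferInstance⟧)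
          =ᵐ[P] (X ⁻¹' s).indicator (P⟦Y ⁻¹' u | MeasurableSpace.comap X inferInstance⟧) := by
        have h1 : (Y ⁻¹' u ∩ X ⁻¹' s).indicator (fun _ => (1:ℝ))
            = (X ⁻¹' s).indicator ((Y ⁻¹' u).indicator (fun _ => (1:ℝ))) := by
          rw [Set.indicator_indicator, Set.inter_comm]
        rw [show (P⟦Y ⁻¹' u ∩ X ⁻¹' s | MeasurableSpace.comap X inferInstance⟧)
          = P[(Y ⁻¹' u ∩ X ⁻¹' s).indicator (fun _ => (1:ℝ))
              | MeasurableSpace.comap X inferInstance] from rfl, h1]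
        exact condExp_indicator ((integrable_const (1:ℝ)).indicator (hY hu)) hC'
      have hR : (P⟦X ⁻¹' s ∩ N ⁻¹' t | MeasurableSpace.comap X inferInstance⟧)
          =ᵐ[P] r • (P⟦X ⁻¹' s | MeasurableSpace.comap X inferInstance⟧) := by
        rw [Set.inter_comm]
        exact condexp_inter_of_indep' hm'₂ hXY.comap_le hN.comap_le P hIndep' hA hCm₂
      have hC : (P⟦X ⁻¹' s | MeasurableSpace.comap X inferInstance⟧)
          = (X ⁻¹' s).indicator (fun _ => (1:ℝ)) :=
        condExp_of_stronglyMeasurable hX.comap_le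
          (stronglyMeasurable_const.indicator hC')
          ((integrable_const (1:ℝ)).indicator (hX hs))
      filter_upwards [hL, hBC, hR] with ω hLω hBCω hRω
      rw [hLω, Pi.mul_apply, hRω, Pi.smul_apply, hBCω, Pi.smul_apply, hC]
      by_cases hω : ω ∈ X ⁻¹' s <;>
        simp [Set.indicator_apply, hω, mul_comm, smul_eq_mul]
    have hp1 : IsPiSystem {s | MeasurableSet[MeasurableSpace.comap Y inferInstance] s} :=
      by
        intro s hs t ht _
        simp only [Set.mem_setOf_eq] at *
        exact hs.inter ht
    refine Kernel.IndepSets.indep hY.comap_le hXN.comap_le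
      hp1 ((isPiSystem_prod).comap _)
      (@generateFrom_measurableSet Ω (MeasurableSpace.comap Y inferInstance)).symm ?_ hsets
    conv_lhs => rw [← generateFrom_prod]
    rw [comap_generateFrom]
    rfl
  have hcomp := key.comp (measurable_id (α := ℝ))
    (show Measurable (fun p : ℝ × ℝ => c * p.1 + p.2) by fun_prop)
  exact hcomp
end

section
/- Let t, k be natural numbers with 1 ≤ k < t, let ρ be a real, D a nonnegative real, and (σ_s) positive reals. Let X̂, together with N_{t−k+1}, …, N_t, be random variables on a probability space such that Z := X_{t−k} − X̂ and the innovations N_{t−k+1}, …, N_t are square-integrable with mean zero, the family {Z, N_{t−k+1}, …, N_t} is mutually independent, E[Z²] = D, E[N_s²] = (1−ρ²)·σ_s² for t−k+1 ≤ s ≤ t, and the sources satisfy the recursion X_{s+1} = ρ·(σ_{s+1}/σ_s)·X_s + N_{s+1} for t−k ≤ s ≤ t−1. Then the k-step predictor X̃ := ρ^k·(σ_t/σ_{t−k})·X̂ achieves mean-squared error E[(X_t − X̃)²] = ρ^{2k}·(σ_t²/σ_{t−k}²)·D + (1−ρ^{2k})·σ_t². -/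
open MeasureTheory ProbabilityTheory Finset

/-- Corollary 1 (distortion of the k-step predictor): if the reconstruction `X̂` of frame
`t-k` has zero-mean reconstruction error `Z = X_{t-k} - X̂` with `E[Z²] = D`, the innovations
`N_s` are zero-mean with `E[N_s²] = (1-ρ²)σ_s²`, the family `{Z, N_{t-k+1}, …, N_t}` is
mutually independent, and the sources satisfy `X_{s+1} = ρ (σ_{s+1}/σ_s) X_s + N_{s+1}`, then
the k-step predictor `X̃ = ρ^k (σ_t/σ_{t-k}) X̂` achieves
`E[(X_t - X̃)²] = ρ^{2k} (σ_t²/σ_{t-k}²) D + (1-ρ^{2k}) σ_t²`. -/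
theorem k_step_predictor_mse
    {Ω : Type*} [MeasurableSpace Ω] (P : Measure Ω) [IsProbabilityMeasure P]
    (t k : ℕ) (hk1 : 1 ≤ k) (hkt : k < t) (ρ D : ℝ) (hD : 0 ≤ D)
    (σ : ℕ → ℝ) (hσ : ∀ s, 0 < σ s)
    (Xhat : Ω → ℝ) (X N : ℕ → Ω → ℝ)
    (Z : Ω → ℝ) (hZ : Z = fun ω => X (t - k) ω - Xhat ω)
    (hZL2 : MemLp Z 2 P) (hNL2 : ∀ s, t - k + 1 ≤ s → s ≤ t → MemLp (N s) 2 P)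
    (hZmean : ∫ ω, Z ω ∂P = 0)
    (hNmean : ∀ s, t - k + 1 ≤ s → s ≤ t → ∫ ω, N s ω ∂P = 0)
    (hIndep : iIndepFun
      (Fin.cons Z (fun j : Fin k => N (t - k + 1 + j.1)) : Fin (k + 1) → Ω → ℝ) P)
    (hZvar : ∫ ω, Z ω ^ 2 ∂P = D)
    (hNvar : ∀ s, t - k + 1 ≤ s → s ≤ t → ∫ ω, N s ω ^ 2 ∂P = (1 - ρ ^ 2) * σ s ^ 2)
    (hrec : ∀ s, t - k ≤ s → s < t →
      X (s + 1) = fun ω => ρ * (σ (s + 1) / σ s) * X s ω + N (s + 1) ω) :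
    ∫ ω, (X t ω - ρ ^ k * (σ t / σ (t - k)) * Xhat ω) ^ 2 ∂P =
      ρ ^ (2 * k) * (σ t ^ 2 / σ (t - k) ^ 2) * D + (1 - ρ ^ (2 * k)) * σ t ^ 2 := by
  set a := t - k with ha
  have hat : a + k = t := Nat.sub_add_cancel hkt.le
  have hσne : ∀ s, σ s ≠ 0 := fun s => (hσ s).ne'
  -- decomposition of X (a + j)
  have decomp : ∀ j, j ≤ k → ∀ ω, X (a + j) ω =
      ρ ^ j * (σ (a + j) / σ a) * X a ω +
      ∑ i ∈ Finset.range j, ρ ^ (j - 1 - i) * (σ (a + j) / σ (a + 1 + i)) * N (a + 1 + i) ω := by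
    intro j
    induction j with
    | zero => intro _ ω; simp [div_self (hσne a)]
    | succ j ih =>
      intro hj ω
      have hj' : j ≤ k := Nat.le_of_succ_le hj
      have hlt : a + j < t := by omega
      have hr := hrec (a + j) (Nat.le_add_right _ _) hlt
      have hidx : a + (j + 1) = a + j + 1 := by omega
      rw [hidx, hr]
      simp only [ih hj' ω, Finset.sum_range_succ]
      rw [mul_add, Finset.mul_sum]
      have h1 : ρ * (σ (a + j + 1) / σ (a + j)) * (ρ ^ j * (σ (a + j) / σ a) * X a ω)
          = ρ ^ (j + 1) * (σ (a + j + 1) / σ a) * X a ω := by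
        rw [pow_succ]
        field_simp [hσne]
      have h2 : ∀ i ∈ Finset.range j,
          ρ * (σ (a + j + 1) / σ (a + j)) *
            (ρ ^ (j - 1 - i) * (σ (a + j) / σ (a + 1 + i)) * N (a + 1 + i) ω)
          = ρ ^ (j + 1 - 1 - i) * (σ (a + j + 1) / σ (a + 1 + i)) * N (a + 1 + i) ω := by
        intro i hi
        have hij : i < j := Finset.mem_range.mp hi
        have he : j + 1 - 1 - i = (j - 1 - i) + 1 := by omega
        rw [he, pow_succ]
        field_simp [hσne]
      have h3 : ρ ^ (j + 1 - 1 - j) * (σ (a + j + 1) / σ (a + 1 + j)) * N (a + 1 + j) ω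
          = N (a + j + 1) ω := by
        have he : j + 1 - 1 - j = 0 := by omega
        have h4 : a + 1 + j = a + j + 1 := by omega
        rw [he, h4, pow_zero, div_self (hσne _), one_mul, one_mul]
      rw [Finset.sum_congr rfl h2, h1, h3]
      ring
  -- the coefficient and variable families
  set c : Fin (k + 1) → ℝ := Fin.cons (ρ ^ k * (σ t / σ a))
    (fun j : Fin k => ρ ^ (k - 1 - j.1) * (σ t / σ (a + 1 + j.1))) with hc
  set Y : Fin (k + 1) → Ω → ℝ :=
    (Fin.cons Z (fun j : Fin k => N (a + 1 + j.1)) : Fin (k + 1) → Ω → ℝ) with hY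
  set W : Fin (k + 1) → Ω → ℝ := fun i ω => c i * Y i ω with hW
  -- the error equals the sum
  have hsum : ∀ ω, X t ω - ρ ^ k * (σ t / σ a) * Xhat ω = ∑ i, W i ω := by
    intro ω
    have hd := decomp k le_rfl ω
    rw [hat] at hd
    rw [Fin.sum_univ_succ]
    have hW0 : W 0 ω = ρ ^ k * (σ t / σ a) * Z ω := by simp [hW, hc, hY]
    have hWs : ∀ j : Fin k, W j.succ ω
        = ρ ^ (k - 1 - j.1) * (σ t / σ (a + 1 + j.1)) * N (a + 1 + j.1) ω := by
      intro j; simp [hW, hc, hY]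
    rw [hW0, Finset.sum_congr rfl (fun j _ => hWs j)]
    rw [Fin.sum_univ_eq_sum_range (fun i => ρ ^ (k - 1 - i) * (σ t / σ (a + 1 + i)) * N (a + 1 + i) ω) k]
    rw [hd, hZ]
    ring
  -- L² and mean facts
  have hbound : ∀ j : Fin k, a + 1 ≤ a + 1 + j.1 ∧ a + 1 + j.1 ≤ t := by
    intro j; constructor <;> omega
  have hYL2 : ∀ i, MemLp (Y i) 2 P := by
    intro i
    refine Fin.cases ?_ ?_ i
    · simpa [hY] using hZL2
    · intro j
      simpa [hY] using hNL2 (a + 1 + j.1) (hbound j).1 (hbound j).2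
  have hWL2 : ∀ i, MemLp (W i) 2 P := fun i => (hYL2 i).const_mul (c i)
  have hYmean : ∀ i, ∫ ω, Y i ω ∂P = 0 := by
    intro i
    refine Fin.cases ?_ ?_ i
    · simpa [hY] using hZmean
    · intro j
      simpa [hY] using hNmean (a + 1 + j.1) (hbound j).1 (hbound j).2
  have hWmean : ∀ i, ∫ ω, W i ω ∂P = 0 := by
    intro i
    simp only [hW]
    rw [integral_const_mul, hYmean i, mul_zero]
  -- independence of W
  have hWindep : iIndepFun W P := by
    have := hIndep.comp (fun i : Fin (k + 1) => fun x : ℝ => c i * x)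
      (fun i => measurable_const_mul (c i))
    exact this
  -- variance computation
  have hvar : variance (∑ i, W i) P = ∑ i, variance (W i) P := by
    refine IndepFun.variance_sum (fun i _ => hWL2 i) ?_
    intro i _ j _ hij
    exact hWindep.indepFun hij
  have hWsumL2 : MemLp (∑ i, W i) 2 P := memLp_finset_sum' _ (fun i _ => hWL2 i)
  have hsummean : ∫ ω, (∑ i, W i) ω ∂P = 0 := by
    have : ∫ ω, (∑ i, W i) ω ∂P = ∑ i, ∫ ω, W i ω ∂P := by
      simp only [Finset.sum_apply]
      exact integral_finset_sum _ (fun i _ => (hWL2 i).integrable one_le_two)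
    rw [this]
    simp [hWmean]
  have hmain : ∫ ω, (X t ω - ρ ^ k * (σ t / σ a) * Xhat ω) ^ 2 ∂P
      = ∑ i, variance (W i) P := by
    rw [← hvar, variance_eq_sub hWsumL2]
    simp only [Pi.pow_apply]
    rw [show (∫ ω, (∑ i, W i) ω ∂P) = 0 from hsummean]
    rw [sub_eq_self.mpr (by norm_num)]
    refine integral_congr_ae (Filter.Eventually.of_forall fun ω => ?_)
    simp only [Pi.pow_apply, Finset.sum_apply]
    rw [hsum ω]
  -- value of each variance
  have hvarW : ∀ i, variance (W i) P = c i ^ 2 * ∫ ω, Y i ω ^ 2 ∂P := by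
    intro i
    rw [variance_eq_sub (hWL2 i)]
    simp only [Pi.pow_apply]
    rw [show (∫ ω, W i ω ∂P) = 0 from hWmean i, sub_eq_self.mpr (by norm_num)]
    simp only [hW, mul_pow]
    rw [integral_const_mul]
  have hvarW0 : variance (W 0) P = ρ ^ (2 * k) * (σ t ^ 2 / σ a ^ 2) * D := by
    rw [hvarW 0]
    have : ∫ ω, Y 0 ω ^ 2 ∂P = D := by simpa [hY] using hZvar
    rw [this]
    simp only [hc, Fin.cons_zero]
    rw [mul_pow, div_pow, ← pow_mul]
    ring
  have hvarWs : ∀ j : Fin k, variance (W j.succ) P = (1 - ρ ^ 2) * ρ ^ (2 * (k - 1 - j.1)) * σ t ^ 2 := by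
    intro j
    rw [hvarW j.succ]
    have h1 : ∫ ω, Y j.succ ω ^ 2 ∂P = (1 - ρ ^ 2) * σ (a + 1 + j.1) ^ 2 := by
      simpa [hY] using hNvar (a + 1 + j.1) (hbound j).1 (hbound j).2
    rw [h1]
    simp only [hc, Fin.cons_succ]
    rw [mul_pow, div_pow, ← pow_mul]
    field_simp [hσne]
    ring
  -- put it together
  rw [hmain, Fin.sum_univ_succ, hvarW0]
  rw [Finset.sum_congr rfl (fun j _ => hvarWs j)]
  rw [Fin.sum_univ_eq_sum_range (fun i => (1 - ρ ^ 2) * ρ ^ (2 * (k - 1 - i)) * σ t ^ 2) k]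
  have hgeom : ∑ i ∈ Finset.range k, (1 - ρ ^ 2) * ρ ^ (2 * (k - 1 - i)) * σ t ^ 2
      = (1 - ρ ^ (2 * k)) * σ t ^ 2 := by
    have h1 : ∀ i ∈ Finset.range k, (1 - ρ ^ 2) * ρ ^ (2 * (k - 1 - i)) * σ t ^ 2
        = (1 - ρ ^ 2) * σ t ^ 2 * (ρ ^ 2) ^ (k - 1 - i) := by
      intro i _
      rw [pow_mul]
      ring
    rw [Finset.sum_congr rfl h1, ← Finset.mul_sum]
    have h2 : ∑ i ∈ Finset.range k, (ρ ^ 2) ^ (k - 1 - i) = ∑ i ∈ Finset.range k, (ρ ^ 2) ^ i := by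
      rw [← Finset.sum_range_reflect]
      refine Finset.sum_congr rfl fun i hi => ?_
      rw [show k - 1 - (k - 1 - i) = i from by have := Finset.mem_range.mp hi; omega]
    rw [h2]
    have h3 := geom_sum_mul (ρ ^ 2) k
    have : (1 - ρ ^ 2) * (∑ i ∈ Finset.range k, (ρ ^ 2) ^ i) = 1 - (ρ ^ 2) ^ k := by
      linear_combination -h3
    rw [mul_comm ((1 - ρ ^ 2)) (σ t ^ 2), mul_assoc, this, ← pow_mul]
    ring
  rw [hgeom]
end

section
/- Let k be a natural number, ρ a real, D a real, and σ : ℕ → ℝ with σ_j > 0 for all j ≤ k. Let v : ℕ → ℝ satisfy v 0 = (σ_0²)⁻¹·σ_0²·D (i.e., v 0 = D) and the one-step DPCM error-variance recursion v_{j+1} = ρ²·(σ_{j+1}²/σ_j²)·v_j + (1−ρ²)·σ_{j+1}² for all j < k. Then v_k = ρ^{2k}·(σ_k²/σ_0²)·D + (1−ρ^{2k})·σ_k². -/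
/-- Closed form for the iterated one-step DPCM error-variance recursion: if `v 0 = D` and
`v_{j+1} = ρ² (σ_{j+1}²/σ_j²) v_j + (1-ρ²) σ_{j+1}²` for `j < k`, then
`v k = ρ^{2k} (σ_k²/σ_0²) D + (1-ρ^{2k}) σ_k²`. -/
theorem dpcm_error_variance_closed_form
    (k : ℕ) (ρ D : ℝ) (σ : ℕ → ℝ) (hσ : ∀ j, j ≤ k → 0 < σ j)
    (v : ℕ → ℝ)
    (hv0 : v 0 = (σ 0 ^ 2)⁻¹ * σ 0 ^ 2 * D)
    (hrec : ∀ j, j < k →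
      v (j + 1) = ρ ^ 2 * (σ (j + 1) ^ 2 / σ j ^ 2) * v j + (1 - ρ ^ 2) * σ (j + 1) ^ 2) :
    v k = ρ ^ (2 * k) * (σ k ^ 2 / σ 0 ^ 2) * D + (1 - ρ ^ (2 * k)) * σ k ^ 2 := by
  induction k with
  | zero =>
      have h0 : σ 0 ≠ 0 := (hσ 0 le_rfl).ne'
      simp [hv0]
      field_simp
      simp
  | succ n ih =>
      have hσ' : ∀ j, j ≤ n → 0 < σ j := fun j hj => hσ j (hj.trans (Nat.le_succ n))
      have hvn := ih hσ' (fun j hj => hrec j (hj.trans (Nat.lt_succ_self n)))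
      have hn : σ n ≠ 0 := (hσ' n le_rfl).ne'
      have h0 : σ 0 ≠ 0 := (hσ' 0 (Nat.zero_le n)).ne'
      rw [hrec n (Nat.lt_succ_self n), hvn]
      field_simp
      ring
end
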